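/- Let θ be a linear order on ℤ in which both odd and even numbers appear monotonically increasing. In ℤ^2, the total order construction path from the origin o to q' = (2n, 4n) using any shifted copy θ' of θ (θ' also has odds and evens monotone increasing) passes through the point (2n, 2n); moreover, the last 2n steps of the path are all in the x_2 direction. -/

import Mathlib

open scoped Classical

/-- One step of the total order construction in `ℤ²` for the positive quadrant:
from the point `m`, step in the `x₁` direction if `m.1 + m.2` is among the
`q.1 - p.1` smallest elements (w.r.t. `r`) of the interval
`[p.1 + p.2, q.1 + q.2 - 1]`, and otherwise step in the `x₂` direction. -/
noncomputable def step2 (r : ℤ → ℤ → Prop) (p q m : ℤ × ℤ) : ℤ × ℤ :=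
  if ((Finset.Icc (p.1 + p.2) (q.1 + q.2 - 1)).filter
      (fun y => r y (m.1 + m.2))).card < (q.1 - p.1).toNat
  then (m.1 + 1, m.2) else (m.1, m.2 + 1)

/-- The point visited after `j` steps of the total order construction path
from `p` towards `q` generated by the order `r`. -/
noncomputable def path2 (r : ℤ → ℤ → Prop) (p q : ℤ × ℤ) : ℕ → ℤ × ℤ
  | 0 => p
  | j + 1 => step2 r p q (path2 r p q j)

lemma count_small (r : ℤ → ℤ → Prop) (h : IsStrictTotalOrder ℤ r) (T : Finset ℤ) (k : ℕ)
    (hk : k ≤ T.card) :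
    (T.filter (fun s => (T.filter (fun y => r y s)).card < k)).card = k := by
  set rank : ℤ → ℕ := fun s => (T.filter (fun y => r y s)).card with hrank
  have hmonor : ∀ a ∈ T, ∀ b ∈ T, r a b → rank a < rank b := by
    intro a ha b hb hab
    have hsub : insert a (T.filter (fun y => r y a)) ⊆ T.filter (fun y => r y b) := by
      intro y hy
      rcases Finset.mem_insert.mp hy with rfl | hy
      · exact Finset.mem_filter.mpr ⟨ha, hab⟩
      · obtain ⟨hyT, hya⟩ := Finset.mem_filter.mp hy
        exact Finset.mem_filter.mpr ⟨hyT, h.trans _ _ _ hya hab⟩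
    have hnm : a ∉ T.filter (fun y => r y a) := fun hmem =>
      h.irrefl a (Finset.mem_filter.mp hmem).2
    have := Finset.card_le_card hsub
    rw [Finset.card_insert_of_notMem hnm] at this
    simpa [rank] using this
  have hinj : Set.InjOn rank T := by
    intro a ha b hb hab
    by_contra hne
    rcases (haveI := h; trichotomous_of r a b) with h1 | h1 | h1
    · exact absurd hab (Nat.ne_of_lt (hmonor a ha b hb h1))
    · exact hne h1
    · exact absurd hab.symm (Nat.ne_of_lt (hmonor b hb a ha h1))
  have hlt : ∀ s ∈ T, rank s < T.card := by
    intro s hs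
    have hsub : T.filter (fun y => r y s) ⊆ T.erase s := by
      intro y hy
      obtain ⟨hyT, hys⟩ := Finset.mem_filter.mp hy
      exact Finset.mem_erase.mpr ⟨fun e => h.irrefl s (e ▸ hys), hyT⟩
    calc rank s ≤ (T.erase s).card := Finset.card_le_card hsub
    _ < T.card := Finset.card_erase_lt_of_mem hs
  have himg : T.image rank = Finset.range T.card := by
    apply Finset.eq_of_subset_of_card_le
    · intro x hx
      obtain ⟨s, hs, rfl⟩ := Finset.mem_image.mp hx
      exact Finset.mem_range.mpr (hlt s hs)
    · rw [Finset.card_range, Finset.card_image_of_injOn hinj]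
  have hfilt : (T.filter (fun s => rank s < k)).image rank = Finset.range k := by
    rw [← Finset.filter_image (p := fun x => x < k), himg]
    ext x
    simp only [Finset.mem_filter, Finset.mem_range]
    omega
  have := congrArg Finset.card hfilt
  rwa [Finset.card_image_of_injOn (hinj.mono (by intro x hx; exact Finset.mem_of_mem_filter x hx)),
    Finset.card_range] at this

theorem stmt_12 (r : ℤ → ℤ → Prop) (h : IsStrictTotalOrder ℤ r)
    (hmono : ∀ a b : ℤ, a < b → a % 2 = b % 2 → r a b)
    (n : ℕ) (hn : 1 ≤ n) :
    path2 r (0, 0) ((2 * n : ℤ), (4 * n : ℤ)) (4 * n) = ((2 * n : ℤ), (2 * n : ℤ)) ∧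
    ∀ j : ℕ, 4 * n ≤ j → j < 6 * n →
      path2 r (0, 0) ((2 * n : ℤ), (4 * n : ℤ)) (j + 1) =
        ((path2 r (0, 0) ((2 * n : ℤ), (4 * n : ℤ)) j).1,
         (path2 r (0, 0) ((2 * n : ℤ), (4 * n : ℤ)) j).2 + 1) := by
  set p : ℤ × ℤ := (0, 0) with hp
  set q : ℤ × ℤ := ((2 * n : ℤ), (4 * n : ℤ)) with hq
  set T : Finset ℤ := Finset.Icc 0 (6 * n - 1) with hT
  have hTq : Finset.Icc (p.1 + p.2) (q.1 + q.2 - 1) = T := by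
    simp only [hp, hq, hT]
    norm_num
    ring_nf
  have htoNat : (q.1 - p.1).toNat = 2 * n := by simp [hp, hq]; omega
  set C : ℤ → Prop := fun s => (T.filter (fun y => r y s)).card < 2 * n with hC
  -- step2 rewritten
  have hstep : ∀ m : ℤ × ℤ, step2 r p q m =
      if C (m.1 + m.2) then (m.1 + 1, m.2) else (m.1, m.2 + 1) := by
    intro m
    rw [step2, hTq, htoNat]
  -- C fails for large sums
  have hbig : ∀ s : ℤ, 4 * n ≤ s → s ≤ 6 * n - 1 → ¬ C s := by
    intro s hs1 hs2 hCs
    have hcard : (Finset.range (2 * n)).card ≤ (T.filter (fun y => r y s)).card := by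
      refine Finset.card_le_card_of_injOn (fun i : ℕ => s - 2 * ((i : ℤ) + 1)) ?_ ?_
      · intro i hi
        have hi' : (i : ℤ) < 2 * n := by exact_mod_cast Finset.mem_range.mp hi
        dsimp only
        refine Finset.mem_filter.mpr ⟨Finset.mem_Icc.mpr ⟨by omega, by omega⟩, ?_⟩
        exact hmono _ _ (by omega) (by omega)
      · intro a _ b _ hab
        dsimp only at hab
        omega
    rw [Finset.card_range] at hcard
    omega
  -- explicit formula
  have key : ∀ j : ℕ, path2 r p q j =
      ((((Finset.range j).filter (fun i : ℕ => C (i : ℤ))).card : ℤ),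
        (j : ℤ) - (((Finset.range j).filter (fun i : ℕ => C (i : ℤ))).card : ℤ)) := by
    intro j
    induction j with
    | zero => simp [path2, hp]
    | succ j ih =>
      rw [path2, ih, hstep]
      have hsum : ((((Finset.range j).filter (fun i : ℕ => C (i : ℤ))).card : ℤ) +
          ((j : ℤ) - (((Finset.range j).filter (fun i : ℕ => C (i : ℤ))).card : ℤ))) = (j : ℤ) := by
        ring
      rw [hsum]
      by_cases hCj : C (j : ℤ)
      · rw [if_pos hCj]
        have : (Finset.range (j + 1)).filter (fun i : ℕ => C (i : ℤ)) =
            insert j ((Finset.range j).filter (fun i : ℕ => C (i : ℤ))) := by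
          rw [Finset.range_add_one, Finset.filter_insert, if_pos hCj]
        rw [this, Finset.card_insert_of_notMem (by simp)]
        simp only [Prod.mk.injEq]
        push_cast
        constructor <;> ring
      · rw [if_neg hCj]
        have : (Finset.range (j + 1)).filter (fun i : ℕ => C (i : ℤ)) =
            (Finset.range j).filter (fun i : ℕ => C (i : ℤ)) := by
          rw [Finset.range_add_one, Finset.filter_insert, if_neg hCj]
        rw [this]
        simp only [Prod.mk.injEq]
        push_cast
        exact ⟨trivial, by ring⟩
  -- count at 4n
  have hTcard : T.card = 6 * n := by
    rw [hT, Int.card_Icc]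
    omega
  have h6 : (T.filter C).card = 2 * n := by
    have := count_small r h T (2 * n) (by omega)
    simpa [hC] using this
  have hfeq : T.filter C = (Finset.Icc (0 : ℤ) (4 * n - 1)).filter C := by
    ext s
    simp only [Finset.mem_filter, hT, Finset.mem_Icc]
    constructor
    · rintro ⟨⟨h1, h2⟩, h3⟩
      refine ⟨⟨h1, ?_⟩, h3⟩
      by_contra hc
      exact hbig s (by omega) h2 h3
    · rintro ⟨⟨h1, h2⟩, h3⟩
      exact ⟨⟨h1, by omega⟩, h3⟩
  have himg : (Finset.range (4 * n)).image (Nat.cast : ℕ → ℤ) = Finset.Icc (0 : ℤ) (4 * n - 1) := by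
    ext x
    simp only [Finset.mem_image, Finset.mem_range, Finset.mem_Icc]
    constructor
    · rintro ⟨i, hi, rfl⟩
      omega
    · rintro ⟨h1, h2⟩
      exact ⟨x.toNat, by omega, by omega⟩
  have hcount : (((Finset.range (4 * n)).filter (fun i : ℕ => C (i : ℤ))).card) = 2 * n := by
    have h1 : ((Finset.range (4 * n)).filter (fun i : ℕ => C (i : ℤ))).image (Nat.cast : ℕ → ℤ)
        = (Finset.Icc (0 : ℤ) (4 * n - 1)).filter C := by
      rw [← Finset.filter_image (p := C), himg]
    have h2 := congrArg Finset.card h1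
    rw [Finset.card_image_of_injective _ (fun a b => by exact_mod_cast id)] at h2
    rw [h2, ← hfeq, h6]
  constructor
  · rw [key (4 * n), hcount]
    simp only [Prod.mk.injEq]
    push_cast
    constructor <;> ring
  · intro j hj1 hj2
    rw [path2, hstep]
    have hsum : (path2 r p q j).1 + (path2 r p q j).2 = (j : ℤ) := by
      rw [key j]; ring
    rw [hsum, if_neg (hbig (j : ℤ) (by exact_mod_cast by omega) (by push_cast; omega))]
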